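/- For every k ∈ ℕ, the coset of 1 + x in the quotient ring ℤ[x]/⟨S_{k+1}(x)⟩ is a unit if and only if k is not congruent to 1 modulo 3. -/

import Mathlib

open Polynomial

/-- Defining properties of the SU(2) character polynomials `S_j(x)`:
`S_0 = 1`, `S_1 = x` and `S_{j+1} = x·S_j − S_{j−1}` for `j ≥ 1`. -/
def IsSSU2 (S : ℕ → Polynomial ℤ) : Prop :=
  S 0 = 1 ∧ S 1 = Polynomial.X ∧
  ∀ j : ℕ, 1 ≤ j → S (j + 1) = Polynomial.X * S j - S (j - 1)

lemma evalS (S : ℕ → Polynomial ℤ) (hS : IsSSU2 S) :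
    ∀ n, (S n).eval (-1) =
      if n % 3 = 0 then 1 else if n % 3 = 1 then -1 else 0 := by
  intro n
  induction n using Nat.twoStepInduction with
  | zero => simp [hS.1]
  | one => simp [hS.2.1]
  | more n ih1 ih2 =>
    have h := hS.2.2 (n + 1) (by omega)
    simp only [Nat.add_sub_cancel] at h
    rw [h, Polynomial.eval_sub, Polynomial.eval_mul, Polynomial.eval_X, ih1, ih2]
    have h3 : n % 3 = 0 ∨ n % 3 = 1 ∨ n % 3 = 2 := by omega
    rcases h3 with h3 | h3 | h3 <;>
      · have h4 : (n + 1) % 3 = (n % 3 + 1) % 3 := by omega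
        have h5 : (n + 2) % 3 = (n % 3 + 2) % 3 := by omega
        rw [h4, h5, h3]
        norm_num

theorem stmt_14 (S : ℕ → Polynomial ℤ) (hS : IsSSU2 S) (k : ℕ) (hk : 1 ≤ k) :
    IsUnit (Ideal.Quotient.mk (Ideal.span ({S (k + 1)} : Set (Polynomial ℤ)))
        (1 + Polynomial.X)) ↔ ¬ (k % 3 = 1) := by
  have heval := evalS S hS (k + 1)
  constructor
  · intro hu hk1
    have h2 : (k + 1) % 3 = 2 := by omega
    rw [h2] at heval; norm_num at heval
    obtain ⟨b, hb⟩ := hu.exists_right_inv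
    obtain ⟨b', rfl⟩ := Ideal.Quotient.mk_surjective b
    rw [← map_mul, ← map_one (Ideal.Quotient.mk _), Ideal.Quotient.mk_eq_mk_iff_sub_mem,
      Ideal.mem_span_singleton] at hb
    obtain ⟨c, hc⟩ := hb
    have := congrArg (Polynomial.eval (-1)) hc
    simp [heval] at this
  · intro hk1
    set c : ℤ := (S (k + 1)).eval (-1) with hc
    have hc2 : c * c = 1 := by
      have : (k + 1) % 3 = 0 ∨ (k + 1) % 3 = 1 := by omega
      rcases this with h | h <;> rw [heval, h] <;> norm_num
    obtain ⟨q, hq⟩ : X - C (-1 : ℤ) ∣ S (k + 1) - C c :=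
      Polynomial.X_sub_C_dvd_sub_C_eval
    refine IsUnit.of_mul_eq_one (Ideal.Quotient.mk _ (-(C c) * q)) ?_
    rw [← map_mul, ← map_one (Ideal.Quotient.mk _), Ideal.Quotient.mk_eq_mk_iff_sub_mem,
      Ideal.mem_span_singleton]
    refine ⟨-(C c), ?_⟩
    have hCc2 : C c * C c = 1 := by rw [← C_mul, hc2, map_one]
    have hq' : S (k + 1) - C c = (1 + X) * q := by
      rw [hq, show (C (-1 : ℤ)) = -1 by simp]; ring
    linear_combination (C c) * hq' + hCc2
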